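/- Let T = Σ_{e∈E} Y_e be a finite sum of independent Bernoulli random variables with arbitrary success probabilities, and let Q be a Poisson random variable with arbitrary mean. Fix an integer k ≥ 1 with P[T ≤ k] > 0. If E[T | T ≤ k] ≤ E[Q | Q ≤ k], then P[T < k | T ≤ k] ≥ P[Q < k | Q ≤ k]. -/

import Mathlib

open Finset



/-- previous-shift of a sequence -/
def pbPrev (f : ℕ → ℝ) : ℕ → ℝ
  | 0 => 0
  | n+1 => f n

/-- the three structural properties of a Poisson-binomial pmf:
nonnegativity, ultra-log-concavity, interval support -/
def GoodSeq (a : ℕ → ℝ) : Prop :=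
  (∀ t, 0 ≤ a t) ∧
  (∀ t : ℕ, ((t : ℝ)+2) * (a (t+2) * a t) ≤ ((t : ℝ)+1) * (a (t+1) * a (t+1))) ∧
  (∀ s t r : ℕ, s ≤ t → t ≤ r → 0 < a s → 0 < a r → 0 < a t)

lemma goodseq_step (a : ℕ → ℝ) (q p : ℝ) (hq : 0 ≤ q) (hp : 0 ≤ p) (h : GoodSeq a) :
    GoodSeq (fun t => q * a t + p * pbPrev a t) := by
  obtain ⟨hnn, hulc, hsupp⟩ := h
  refine ⟨?_, ?_, ?_⟩
  · intro t
    have : 0 ≤ pbPrev a t := by cases t with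
      | zero => simp [pbPrev]
      | succ n => simpa [pbPrev] using hnn n
    exact add_nonneg (mul_nonneg hq (hnn t)) (mul_nonneg hp this)
  · intro t
    cases t with
    | zero =>
      simp only [pbPrev]
      have h0 := hulc 0
      push_cast at h0 ⊢
      nlinarith [hnn 0, hnn 1, hnn 2, sq_nonneg (p * a 0), sq_nonneg (q * a 1),
        mul_nonneg (mul_nonneg hq hq) (mul_nonneg (hnn 0) (hnn 2))]
    | succ s =>
      simp only [pbPrev]
      have h1 := hulc (s+1)
      have h2 := hulc s
      push_cast at h1 h2 ⊢
      -- key4 : (s+3) a_{s+2} a_s ≤ (s+2) a_{s+1}^2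
      have key4 : ((s:ℝ)+3) * (a (s+2) * a s) ≤ ((s:ℝ)+2) * (a (s+1) * a (s+1)) := by
        nlinarith [mul_nonneg (hnn (s+2)) (hnn s), sq_nonneg (a (s+1)), h2]
      -- key3 : (s+3) a_{s+3} a_s ≤ (s+1) a_{s+2} a_{s+1}
      have key3 : ((s:ℝ)+3) * (a (s+3) * a s) ≤ ((s:ℝ)+1) * (a (s+2) * a (s+1)) := by
        rcases eq_or_lt_of_le (hnn (s+1)) with hz | hp1
        · -- a (s+1) = 0 : then a (s+3) * a s = 0 by interval support
          have hzero : a (s+3) * a s = 0 := by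
            by_contra hne
            have h3 : 0 < a (s+3) := lt_of_le_of_ne (hnn _) (by intro hh; exact hne (by rw [← hh]; ring))
            have h0 : 0 < a s := lt_of_le_of_ne (hnn _) (by intro hh; exact hne (by rw [← hh]; ring))
            have := hsupp s (s+1) (s+3) (by omega) (by omega) h0 h3
            rw [← hz] at this; exact lt_irrefl 0 this
          rw [hzero]
          have : 0 ≤ a (s+2) * a (s+1) := mul_nonneg (hnn _) (hnn _)
          nlinarith
        · rcases eq_or_lt_of_le (hnn (s+2)) with hz | hp2
          · have hzero : a (s+3) * a s = 0 := by
              by_contra hne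
              have h3 : 0 < a (s+3) := lt_of_le_of_ne (hnn _) (by intro hh; exact hne (by rw [← hh]; ring))
              have h0 : 0 < a s := lt_of_le_of_ne (hnn _) (by intro hh; exact hne (by rw [← hh]; ring))
              have := hsupp s (s+2) (s+3) (by omega) (by omega) h0 h3
              rw [← hz] at this; exact lt_irrefl 0 this
            rw [hzero]
            have : 0 ≤ a (s+2) * a (s+1) := mul_nonneg (hnn _) (hnn _)
            nlinarith
          · -- both a(s+1), a(s+2) > 0 : multiply h1 and h2
            have hprod := mul_le_mul h1 h2
              (mul_nonneg (by positivity) (mul_nonneg (hnn _) (hnn _)))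
              (mul_nonneg (by positivity) (mul_nonneg (hnn _) (hnn _)))
            have hP : 0 < (((s:ℝ)+2) * (a (s+1) * a (s+2))) := by positivity
            rw [← mul_le_mul_iff_left₀ hP]
            nlinarith [hprod]
      nlinarith [mul_le_mul_of_nonneg_left h1 (mul_nonneg hq hq),
        mul_le_mul_of_nonneg_left key4 (mul_nonneg hp hp),
        mul_le_mul_of_nonneg_left key3 (mul_nonneg hp hq)]
  · intro s t r hst htr hs hr
    have hterm : ∀ x : ℕ, 0 < q * a x + p * pbPrev a x →
        (0 < q ∧ 0 < a x) ∨ (0 < p ∧ 1 ≤ x ∧ 0 < a (x-1)) := by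
      intro x hx
      cases x with
      | zero =>
        left
        simp only [pbPrev, mul_zero, add_zero] at hx
        rcases mul_pos_iff.mp hx with ⟨h1, h2⟩ | ⟨h1, _⟩
        · exact ⟨h1, h2⟩
        · exact absurd h1 (not_lt.mpr hq)
      | succ n =>
        simp only [pbPrev] at hx
        rcases lt_or_ge 0 (q * a (n+1)) with h | h
        · left
          rcases mul_pos_iff.mp h with ⟨h1, h2⟩ | ⟨h1, _⟩
          · exact ⟨h1, h2⟩
          · exact absurd h1 (not_lt.mpr hq)
        · right
          have hpp : 0 < p * a n := by
            have : 0 ≤ p * a n := mul_nonneg hp (hnn n)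
            nlinarith
          rcases mul_pos_iff.mp hpp with ⟨h1, h2⟩ | ⟨h1, _⟩
          · exact ⟨h1, by omega, by simpa using h2⟩
          · exact absurd h1 (not_lt.mpr hp)
      
    have goal1 : ∀ x : ℕ, 0 < q → 0 < a x → 0 < q * a x + p * pbPrev a x := by
      intro x h1 h2
      have : 0 ≤ p * pbPrev a x := by
        cases x with
        | zero => simp [pbPrev]
        | succ n => exact mul_nonneg hp (by simpa [pbPrev] using hnn n)
      nlinarith
    have goal2 : ∀ x : ℕ, 1 ≤ x → 0 < p → 0 < a (x-1) → 0 < q * a x + p * pbPrev a x := by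
      intro x h1 h2 h3
      cases x with
      | zero => omega
      | succ n =>
        simp only [pbPrev]
        have : 0 < p * a n := mul_pos h2 (by simpa using h3)
        nlinarith [mul_nonneg hq (hnn (n+1))]
    rcases hterm s hs with ⟨hq0, has⟩ | ⟨hp0, hs1, has⟩ <;>
      rcases hterm r hr with ⟨hq0r, har⟩ | ⟨hp0', hr1, har⟩
    · exact goal1 t hq0 (hsupp s t r hst htr has har)
    · -- a s > 0, a (r-1) > 0
      rcases Nat.lt_or_ge t r with htr' | htr'
      · exact goal1 t hq0 (hsupp s t (r-1) hst (by omega) has har)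
      · have : t = r := by omega
        subst this
        exact goal2 t (by omega) hp0' har
    · -- a (s-1) > 0, a r > 0
      exact goal1 t hq0r (hsupp (s-1) t r (by omega) htr has har)
    · -- a (s-1) > 0, a (r-1) > 0
      rcases Nat.lt_or_ge s t with hst' | hst'
      · exact goal2 t (by omega) hp0 (hsupp (s-1) (t-1) (r-1) (by omega) (by omega) has har)
      · have : t = s := by omega
        subst this
        exact goal2 t (by omega) hp0 has



lemma quasiconcave_of_logconcave (u : ℕ → ℝ) (hnn : ∀ t, 0 ≤ u t)
    (hlc : ∀ t : ℕ, u t * u (t+2) ≤ u (t+1) * u (t+1))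
    (hsupp : ∀ s t r : ℕ, s ≤ t → t ≤ r → 0 < u s → 0 < u r → 0 < u t)
    (i k : ℕ) (hik : i ≤ k) (C : ℝ) (hC : 0 < C)
    (hCi : C ≤ u i) (hCk : C ≤ u k) :
    ∀ t, i ≤ t → t ≤ k → C ≤ u t := by
  have hui : 0 < u i := lt_of_lt_of_le hC hCi
  have huk : 0 < u k := lt_of_lt_of_le hC hCk
  have hpos : ∀ t, i ≤ t → t ≤ k → 0 < u t := fun t h1 h2 => hsupp i t k h1 h2 hui huk
  have chain : ∀ j, i ≤ j → ∀ l, j ≤ l → l+1 ≤ k → u (l+1) * u j ≤ u l * u (j+1) := by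
    intro j hj l
    induction l with
    | zero =>
      intro h0 _
      have : j = 0 := Nat.le_zero.mp h0
      subst this
      exact le_of_eq (mul_comm _ _)
    | succ n ih =>
      intro hjl hlk
      rcases Nat.lt_or_ge j (n+1) with hlt | hge
      · have hjn : j ≤ n := Nat.lt_succ_iff.mp hlt
        have prev := ih hjn (by omega)
        have hlc' := hlc n
        have hun : 0 < u n := hpos n (le_trans hj hjn) (by omega)
        have hun1 : 0 < u (n+1) := hpos (n+1) (by omega) (by omega)
        have hprod := mul_le_mul hlc' prev (mul_nonneg (hnn _) (hnn _))
          (mul_nonneg (hnn _) (hnn _))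
        have key : (u n * u (n+1)) * (u (n+2) * u j) ≤ (u n * u (n+1)) * (u (n+1) * u (j+1)) := by
          nlinarith [hprod]
        exact le_of_mul_le_mul_left key (mul_pos hun hun1)
      · have : j = n+1 := by omega
        subst this
        exact le_of_eq (mul_comm _ _)
  intro t hit htk
  by_cases hmono : ∀ j, i ≤ j → j < t → u j ≤ u (j+1)
  · have inc : ∀ m, i ≤ m → m ≤ t → u i ≤ u m := by
      intro m
      induction m with
      | zero =>
        intro h1 _
        have : i = 0 := Nat.le_zero.mp h1
        rw [this]
      | succ n ih =>
        intro h1 h2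
        rcases Nat.lt_or_ge n i with h | h
        · have : i = n+1 := by omega
          rw [this]
        · exact le_trans (ih h (by omega)) (hmono n h (by omega))
    exact le_trans hCi (inc t hit le_rfl)
  · push_neg at hmono
    obtain ⟨j, hij, hjt, hdec⟩ := hmono
    have step : ∀ l, j ≤ l → l+1 ≤ k → u (l+1) ≤ u l := by
      intro l hjl hlk
      have hch := chain j hij l hjl hlk
      have hj0 : 0 < u j := hpos j hij (by omega)
      nlinarith [mul_nonneg (hnn l) (hnn (j+1)), hnn l, hdec]
    have mono : ∀ m, t ≤ m → m ≤ k → u m ≤ u t := by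
      intro m
      induction m with
      | zero =>
        intro h1 _
        have : t = 0 := Nat.le_zero.mp h1
        rw [this]
      | succ n ih =>
        intro h1 h2
        rcases Nat.lt_or_ge n t with h | h
        · have : t = n+1 := by omega
          rw [this]
        · exact le_trans (step n (by omega) h2) (ih h (by omega))
    exact le_trans hCk (mono k htk le_rfl)





lemma pb_rec {E : Type*} [DecidableEq E] (p : E → ℝ) (e : E) (s : Finset E) (he : e ∉ s) (t : ℕ) :
    (∑ S ∈ Finset.powersetCard t (insert e s), (∏ x ∈ S, p x) * ∏ x ∈ (insert e s) \ S, (1 - p x))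
    = (1 - p e) * (∑ S ∈ Finset.powersetCard t s, (∏ x ∈ S, p x) * ∏ x ∈ s \ S, (1 - p x))
      + p e * pbPrev (fun t => ∑ S ∈ Finset.powersetCard t s, (∏ x ∈ S, p x) * ∏ x ∈ s \ S, (1 - p x)) t := by
  cases t with
  | zero =>
    simp only [Finset.powersetCard_zero, Finset.sum_singleton, Finset.prod_empty, one_mul,
      Finset.sdiff_empty, pbPrev, mul_zero, add_zero]
    rw [Finset.prod_insert he]
  | succ n =>
    rw [Finset.powersetCard_succ_insert he]
    rw [Finset.sum_union]
    · congr 1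
      · -- sets not containing e
        rw [Finset.mul_sum]
        apply Finset.sum_congr rfl
        intro S hS
        rw [Finset.mem_powersetCard] at hS
        have heS : e ∉ S := fun h => he (hS.1 h)
        have : (insert e s) \ S = insert e (s \ S) := by
          ext x
          simp only [Finset.mem_sdiff, Finset.mem_insert]
          constructor
          · rintro ⟨h1 | h1, h2⟩
            · exact Or.inl h1
            · exact Or.inr ⟨h1, h2⟩
          · rintro (h1 | ⟨h1, h2⟩)
            · subst h1; exact ⟨Or.inl rfl, heS⟩
            · exact ⟨Or.inr h1, h2⟩
        rw [this, Finset.prod_insert (fun h => he (Finset.mem_sdiff.mp h).1)]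
        ring
      · -- sets containing e : image of insert e
        rw [Finset.sum_image]
        · simp only [pbPrev]
          rw [Finset.mul_sum]
          apply Finset.sum_congr rfl
          intro S hS
          rw [Finset.mem_powersetCard] at hS
          have heS : e ∉ S := fun h => he (hS.1 h)
          rw [Finset.prod_insert heS]
          have : (insert e s) \ (insert e S) = s \ S := by
            ext x
            simp only [Finset.mem_sdiff, Finset.mem_insert]
            constructor
            · rintro ⟨h1 | h1, h2⟩
              · exact absurd (Or.inl h1) h2
              · exact ⟨h1, fun h => h2 (Or.inr h)⟩
            · rintro ⟨h1, h2⟩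
              refine ⟨Or.inr h1, ?_⟩
              rintro (h3 | h3)
              · exact he (h3 ▸ h1)
              · exact h2 h3
          rw [this]
          ring
        · intro S1 h1 S2 h2 hins
          rw [Finset.mem_coe, Finset.mem_powersetCard] at h1 h2
          have : ∀ S : Finset E, S ⊆ s → (insert e S).erase e = S := by
            intro S hSs
            rw [Finset.erase_insert (fun h => he (hSs h))]
          rw [← this S1 h1.1, ← this S2 h2.1, hins]
    · -- disjointness
      rw [Finset.disjoint_left]
      intro S hS1 hS2
      rw [Finset.mem_powersetCard] at hS1
      rw [Finset.mem_image] at hS2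
      obtain ⟨S', _, rfl⟩ := hS2
      exact he (hS1.1 (Finset.mem_insert_self e S'))

lemma goodseq_pb {E : Type*} [DecidableEq E] (p : E → ℝ) (hp : ∀ e, 0 ≤ p e ∧ p e ≤ 1)
    (s : Finset E) :
    GoodSeq (fun t => ∑ S ∈ Finset.powersetCard t s, (∏ x ∈ S, p x) * ∏ x ∈ s \ S, (1 - p x)) := by
  induction s using Finset.induction_on with
  | empty =>
    have hval : (fun t => ∑ S ∈ Finset.powersetCard t (∅ : Finset E),
        (∏ x ∈ S, p x) * ∏ x ∈ (∅ : Finset E) \ S, (1 - p x))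
        = fun t => if t = 0 then 1 else 0 := by
      funext t
      cases t with
      | zero => simp
      | succ n =>
        rw [Finset.powersetCard_eq_empty.mpr (by simp)]
        simp
    rw [hval]
    refine ⟨?_, ?_, ?_⟩
    · intro t; dsimp only; split <;> norm_num
    · intro t; norm_num
    · intro a t r h1 h2 ha hr
      dsimp only at ha hr ⊢
      split at ha
      · rename_i h
        have : a = 0 := h
        split at hr
        · rename_i h'
          have : r = 0 := h'
          have : t = 0 := by omega
          simp [this]
        · norm_num at hr
      · norm_num at ha
  | @insert e s' he ih =>
    have heq : (fun t => ∑ S ∈ Finset.powersetCard t (insert e s'),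
        (∏ x ∈ S, p x) * ∏ x ∈ (insert e s') \ S, (1 - p x))
        = fun t => (1 - p e) * (∑ S ∈ Finset.powersetCard t s', (∏ x ∈ S, p x) * ∏ x ∈ s' \ S, (1 - p x))
          + p e * pbPrev (fun u => ∑ S ∈ Finset.powersetCard u s', (∏ x ∈ S, p x) * ∏ x ∈ s' \ S, (1 - p x)) t := by
      funext t
      exact pb_rec p e s' he t
    rw [heq]
    exact goodseq_step _ _ _ (by linarith [(hp e).2]) (hp e).1 ih

set_option maxHeartbeats 1600000 in
theorem stmt_7 {E : Type*} [Fintype E] [DecidableEq E]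
    -- T = Σ_e Y_e is a Poisson-binomial sum of independent Bernoullis with parameters p,
    -- so P[T = t] = a t, where
    (p : E → ℝ) (hp : ∀ e, 0 ≤ p e ∧ p e ≤ 1)
    (a : ℕ → ℝ)
    (ha : ∀ t, a t = ∑ S ∈ Finset.powersetCard t (univ : Finset E),
        (∏ e ∈ S, p e) * ∏ e ∈ Sᶜ, (1 - p e))
    -- Q is Poisson with (arbitrary nonnegative) mean lam, so P[Q = t] = b t, where
    (lam : ℝ) (hlam : 0 ≤ lam)
    (b : ℕ → ℝ)
    (hb : ∀ t, b t = Real.exp (-lam) * lam ^ t / (t.factorial : ℝ))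
    (k : ℕ) (hk : 1 ≤ k)
    -- P[T ≤ k] > 0
    (hpos : 0 < ∑ t ∈ range (k + 1), a t)
    -- E[T | T ≤ k] ≤ E[Q | Q ≤ k]
    (hmean : (∑ t ∈ range (k + 1), (t : ℝ) * a t) / (∑ t ∈ range (k + 1), a t) ≤
             (∑ t ∈ range (k + 1), (t : ℝ) * b t) / (∑ t ∈ range (k + 1), b t)) :
    -- P[T < k | T ≤ k] ≥ P[Q < k | Q ≤ k]
    (∑ t ∈ range k, b t) / (∑ t ∈ range (k + 1), b t) ≤
      (∑ t ∈ range k, a t) / (∑ t ∈ range (k + 1), a t) := by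
  -- structural facts about a
  have hgood : GoodSeq a := by
    have h1 : a = (fun t => ∑ S ∈ Finset.powersetCard t (univ : Finset E),
        (∏ x ∈ S, p x) * ∏ x ∈ (univ : Finset E) \ S, (1 - p x)) := by
      funext t
      rw [ha t]
      apply Finset.sum_congr rfl
      intro S _
      rw [Finset.compl_eq_univ_sdiff]
    rw [h1]
    exact goodseq_pb p hp univ
  obtain ⟨hann, hulc, hsupp⟩ := hgood
  have hbnn : ∀ t, 0 ≤ b t := by
    intro t
    rw [hb t]
    have h1 : (0:ℝ) < Real.exp (-lam) := Real.exp_pos _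
    have h2 : (0:ℝ) ≤ lam ^ t := pow_nonneg hlam t
    positivity
  set A := ∑ t ∈ range (k+1), a t with hAdef
  set B := ∑ t ∈ range (k+1), b t with hBdef
  have hA : 0 < A := hpos
  have hB : 0 < B := by
    apply Finset.sum_pos'
    · intro t _; exact hbnn t
    · refine ⟨0, Finset.mem_range.mpr (by omega), ?_⟩
      rw [hb 0]
      simp [Real.exp_pos]
  suffices hMain : a k * B ≤ b k * A by
    rw [div_le_div_iff₀ hB hA]
    have e1 : A = (∑ t ∈ range k, a t) + a k := by rw [hAdef, Finset.sum_range_succ]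
    have e2 : B = (∑ t ∈ range k, b t) + b k := by rw [hBdef, Finset.sum_range_succ]
    nlinarith [hMain, e1, e2]
  rcases eq_or_lt_of_le hlam with hlam0 | hlam'
  · -- lam = 0 case
    have hSb : ∑ t ∈ range (k+1), (t:ℝ) * b t = 0 := by
      apply Finset.sum_eq_zero
      intro t _
      cases t with
      | zero => simp
      | succ n =>
        rw [hb (n+1), ← hlam0]
        simp [zero_pow (by omega : n + 1 ≠ 0)]
    rw [hSb, zero_div] at hmean
    have hSa : ∑ t ∈ range (k+1), (t:ℝ) * a t ≤ 0 := by
      by_contra hc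
      push_neg at hc
      have := div_pos hc hA
      linarith
    have hterm : ∀ t ∈ range (k+1), 0 ≤ (t:ℝ) * a t :=
      fun t _ => mul_nonneg (Nat.cast_nonneg t) (hann t)
    have hallz := (Finset.sum_eq_zero_iff_of_nonneg hterm).mp
      (le_antisymm hSa (Finset.sum_nonneg hterm))
    have hak : a k = 0 := by
      have h0 := hallz k (Finset.mem_range.mpr (by omega))
      have hkne : ((k:ℝ)) ≠ 0 := Nat.cast_ne_zero.mpr (by omega)
      rcases mul_eq_zero.mp h0 with h | h
      · exact absurd h hkne
      · exact h
    rw [hak, zero_mul]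
    exact mul_nonneg (hbnn k) hA.le
  · -- lam > 0 case
    by_contra hcon
    push_neg at hcon
    -- hcon : b k * A < a k * B
    obtain ⟨d, hd⟩ : ∃ d : ℕ → ℝ, ∀ t, d t = B * a t - A * b t := ⟨_, fun _ => rfl⟩
    have hsum0 : ∑ t ∈ range (k+1), d t = 0 := by
      calc ∑ t ∈ range (k+1), d t = ∑ t ∈ range (k+1), (B * a t - A * b t) :=
            Finset.sum_congr rfl (fun t _ => hd t)
        _ = 0 := by
            rw [Finset.sum_sub_distrib, ← Finset.mul_sum, ← Finset.mul_sum, ← hAdef, ← hBdef]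
            ring
    have hdk : 0 < d k := by rw [hd k]; nlinarith [hcon]
    classical
    have hex : ∃ t, 0 < d t := ⟨k, hdk⟩
    obtain ⟨i, hdi, hmin⟩ : ∃ i, 0 < d i ∧ ∀ t, t < i → ¬ 0 < d t :=
      ⟨Nat.find hex, Nat.find_spec hex, fun t ht => Nat.find_min hex ht⟩
    have hi_le : i ≤ k := le_of_not_gt (fun h => hmin k h hdk)
    obtain ⟨C, hCdef⟩ : ∃ C : ℝ, C = A * Real.exp (-lam) := ⟨_, rfl⟩
    have hCpos : 0 < C := by rw [hCdef]; exact mul_pos hA (Real.exp_pos _)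
    obtain ⟨u, hu⟩ : ∃ u : ℕ → ℝ, ∀ t, u t = B * a t * (t.factorial : ℝ) / lam ^ t :=
      ⟨_, fun _ => rfl⟩
    have hequiv : ∀ t : ℕ, C ≤ u t ↔ A * b t ≤ B * a t := by
      intro t
      have hf : (0:ℝ) < (t.factorial : ℝ) := by exact_mod_cast t.factorial_pos
      have hl : (0:ℝ) < lam ^ t := pow_pos hlam' t
      rw [hu t, hCdef, hb t, le_div_iff₀ hl]
      have hiff2 : A * (Real.exp (-lam) * lam ^ t / (t.factorial:ℝ)) ≤ B * a t ↔
          A * Real.exp (-lam) * lam ^ t ≤ B * a t * (t.factorial:ℝ) := by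
        rw [show A * (Real.exp (-lam) * lam ^ t / (t.factorial:ℝ))
            = (A * Real.exp (-lam) * lam ^ t) / (t.factorial:ℝ) from by ring, div_le_iff₀ hf]
      exact hiff2.symm
    have hu_nn : ∀ t, 0 ≤ u t := by
      intro t
      rw [hu t]
      have hf : (0:ℝ) ≤ (t.factorial : ℝ) := by positivity
      have hl : (0:ℝ) ≤ lam ^ t := pow_nonneg hlam t
      exact div_nonneg (mul_nonneg (mul_nonneg hB.le (hann t)) hf) hl
    have hu_lc : ∀ t : ℕ, u t * u (t+2) ≤ u (t+1) * u (t+1) := by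
      intro t
      have hf0 : (0:ℝ) < (t.factorial : ℝ) := by exact_mod_cast t.factorial_pos
      have hf1 : ((t+1).factorial : ℝ) = ((t:ℝ)+1) * (t.factorial : ℝ) := by
        rw [Nat.factorial_succ]; push_cast; ring
      have hf2 : ((t+2).factorial : ℝ) = ((t:ℝ)+2) * (((t+1).factorial : ℝ)) := by
        rw [show t+2 = (t+1)+1 from rfl, Nat.factorial_succ]; push_cast; ring
      have hcc : (B * a t * (t.factorial:ℝ)) * (B * a (t+2) * ((t+2).factorial:ℝ))
          ≤ (B * a (t+1) * ((t+1).factorial:ℝ)) * (B * a (t+1) * ((t+1).factorial:ℝ)) := by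
        have h := hulc t
        rw [hf2, hf1]
        have hfn : (0:ℝ) ≤ (t.factorial : ℝ) * ((t:ℝ)+1) * (t.factorial:ℝ) * (B * B) := by positivity
        nlinarith [mul_le_mul_of_nonneg_left h hfn]
      rw [hu t, hu (t+1), hu (t+2)]
      rw [div_mul_div_comm, div_mul_div_comm,
        div_le_div_iff₀ (by positivity) (by positivity)]
      have hpow : lam ^ t * lam ^ (t+2) = lam ^ (t+1) * lam ^ (t+1) := by ring
      nlinarith [mul_le_mul_of_nonneg_right hcc
        (le_of_lt (mul_pos (pow_pos hlam' t) (pow_pos hlam' (t+2)))), hpow]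
    have ha_of_u : ∀ x, 0 < u x → 0 < a x := by
      intro x hx
      by_contra hle
      push_neg at hle
      have hf : (0:ℝ) ≤ (x.factorial : ℝ) := by positivity
      have hnum : B * a x * (x.factorial:ℝ) ≤ 0 := by
        have h1 : 0 ≤ B * (-a x) * (x.factorial:ℝ) :=
          mul_nonneg (mul_nonneg hB.le (by linarith)) hf
        nlinarith
      have : u x ≤ 0 := by
        rw [hu x]
        exact div_nonpos_of_nonpos_of_nonneg hnum (pow_nonneg hlam x)
      linarith
    have hu_supp : ∀ s' t' r' : ℕ, s' ≤ t' → t' ≤ r' → 0 < u s' → 0 < u r' → 0 < u t' := by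
      intro s' t' r' h1 h2 h3 h4
      have hat : 0 < a t' := hsupp s' t' r' h1 h2 (ha_of_u s' h3) (ha_of_u r' h4)
      rw [hu t']
      have hf : (0:ℝ) < (t'.factorial : ℝ) := by exact_mod_cast t'.factorial_pos
      exact div_pos (mul_pos (mul_pos hB hat) hf) (pow_pos hlam' t')
    have hCi : C ≤ u i := (hequiv i).mpr (by rw [hd i] at hdi; linarith)
    have hCk : C ≤ u k := (hequiv k).mpr (by rw [hd k] at hdk; linarith)
    have hClaim := quasiconcave_of_logconcave u hu_nn hu_lc hu_supp i k hi_le C hCpos hCi hCk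
    have dnn : ∀ t, i ≤ t → t ≤ k → 0 ≤ d t := by
      intro t h1 h2
      have := (hequiv t).mp (hClaim t h1 h2)
      rw [hd t]; linarith
    have dnp : ∀ t, t < i → d t ≤ 0 := fun t ht => le_of_not_gt (hmin t ht)
    have hterm_nn : ∀ t ∈ range (k+1), 0 ≤ ((t:ℝ) - (i:ℝ)) * d t := by
      intro t ht
      have htk : t ≤ k := by have := Finset.mem_range.mp ht; omega
      rcases Nat.lt_or_ge t i with h | h
      · have h1 : ((t:ℝ) - (i:ℝ)) ≤ 0 := by
          have : (t:ℝ) ≤ (i:ℝ) := by exact_mod_cast le_of_lt h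
          linarith
        nlinarith [mul_nonneg (neg_nonneg.mpr h1) (neg_nonneg.mpr (dnp t h))]
      · have h1 : (0:ℝ) ≤ ((t:ℝ) - (i:ℝ)) := by
          have : (i:ℝ) ≤ (t:ℝ) := by exact_mod_cast h
          linarith
        exact mul_nonneg h1 (dnn t h htk)
    have hmean' : (∑ t ∈ range (k+1), (t:ℝ) * a t) * B ≤ (∑ t ∈ range (k+1), (t:ℝ) * b t) * A :=
      (div_le_div_iff₀ hA hB).mp hmean
    have e1 : ∑ t ∈ range (k+1), ((t:ℝ) - (i:ℝ)) * d t
        = (∑ t ∈ range (k+1), (t:ℝ) * a t) * B - (∑ t ∈ range (k+1), (t:ℝ) * b t) * A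
          - (i:ℝ) * (∑ t ∈ range (k+1), d t) := by
      rw [Finset.sum_mul, Finset.sum_mul, Finset.mul_sum, ← Finset.sum_sub_distrib,
        ← Finset.sum_sub_distrib]
      apply Finset.sum_congr rfl
      intro t _
      rw [hd t]
      ring
    rw [hsum0, mul_zero, sub_zero] at e1
    have hsum1 : ∑ t ∈ range (k+1), ((t:ℝ) - (i:ℝ)) * d t ≤ 0 := by
      rw [e1]; linarith
    have hzero : ∀ t ∈ range (k+1), ((t:ℝ) - (i:ℝ)) * d t = 0 := by
      have hsumnn : 0 ≤ ∑ t ∈ range (k+1), ((t:ℝ) - (i:ℝ)) * d t :=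
        Finset.sum_nonneg hterm_nn
      exact (Finset.sum_eq_zero_iff_of_nonneg hterm_nn).mp (le_antisymm hsum1 hsumnn)
    rcases Nat.lt_or_ge i k with hik' | hik'
    · have h0 := hzero k (Finset.mem_range.mpr (by omega))
      have hki : ((k:ℝ) - (i:ℝ)) ≠ 0 := by
        have : (i:ℝ) < (k:ℝ) := by exact_mod_cast hik'
        intro hcontra
        linarith
      rcases mul_eq_zero.mp h0 with h | h
      · exact absurd h hki
      · linarith [hdk]
    · have hik2 : i = k := le_antisymm hi_le hik'
      have hall : ∀ t ∈ range k, d t = 0 := by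
        intro t ht
        have ht' : t < k := Finset.mem_range.mp ht
        have h0 := hzero t (Finset.mem_range.mpr (by omega))
        have hne : ((t:ℝ) - (i:ℝ)) ≠ 0 := by
          have : (t:ℝ) < (i:ℝ) := by
            rw [hik2]
            exact_mod_cast ht'
          intro hcontra
          linarith
        rcases mul_eq_zero.mp h0 with h | h
        · exact absurd h hne
        · exact h
      have hdk0 : ∑ t ∈ range (k+1), d t = d k := by
        rw [Finset.sum_range_succ, Finset.sum_eq_zero hall, zero_add]
      linarith [hsum0, hdk0, hdk]
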